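/- Let n ∈ ℕ with n ≥ 1, let μ be the product measure on ℝ^n whose coordinates are i.i.d. standard Gaussian N(0,1), let v ∈ ℝ^n be nonzero, and let p ∈ (0,1). Define w*(ω) = 1 if ⟨v, ω⟩ ≥ −‖v‖₂ · Φ⁻¹(p) and w*(ω) = 0 otherwise. Then ∫ w* dμ = p and ∫ ⟨v, ω⟩ · w*(ω) dμ(ω) = (‖v‖₂ / √(2π)) · exp(−Φ⁻¹(p)² / 2). -/

import Mathlib

open MeasureTheory ProbabilityTheory
open scoped RealInnerProductSpace

open scoped NNReal ENNReal
open Real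


lemma pdf_factor {a b : ℝ≥0} (ha : a ≠ 0) (hb : b ≠ 0) (z x : ℝ) :
    gaussianPDFReal 0 a x * gaussianPDFReal 0 b (z - x)
      = gaussianPDFReal 0 (a + b) z *
        gaussianPDFReal ((a : ℝ) * z / (a + b)) ((NNReal.mk (a : ℝ) a.coe_nonneg * NNReal.mk (b:ℝ) b.coe_nonneg / (NNReal.mk (a:ℝ) a.coe_nonneg + NNReal.mk (b:ℝ) b.coe_nonneg) : ℝ≥0)) x := by
  have ha' : (0:ℝ) < a := lt_of_le_of_ne (a.coe_nonneg) (by exact_mod_cast (Ne.symm ha))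
  have hb' : (0:ℝ) < b := lt_of_le_of_ne (b.coe_nonneg) (by exact_mod_cast (Ne.symm hb))
  have hab : (0:ℝ) < (a:ℝ) + b := by positivity
  simp only [gaussianPDFReal, NNReal.coe_mk, NNReal.coe_add, sub_zero, zero_sub]
  push_cast
  conv_lhs => rw [mul_mul_mul_comm, ← Real.exp_add]
  conv_rhs => rw [mul_mul_mul_comm, ← Real.exp_add]
  congr 1
  · rw [← mul_inv, ← mul_inv, ← Real.sqrt_mul (by positivity), ← Real.sqrt_mul (by positivity)]
    congr 2
    field_simp
  · congr 1
    field_simp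
    ring

lemma pdf_conv_integral {a b : ℝ≥0} (ha : a ≠ 0) (hb : b ≠ 0) (z : ℝ) :
    ∫ x, gaussianPDFReal 0 a x * gaussianPDFReal 0 b (z - x) = gaussianPDFReal 0 (a + b) z := by
  have hc : (NNReal.mk (a : ℝ) a.coe_nonneg * NNReal.mk (b:ℝ) b.coe_nonneg /
      (NNReal.mk (a:ℝ) a.coe_nonneg + NNReal.mk (b:ℝ) b.coe_nonneg) : ℝ≥0) ≠ 0 := by
    rw [div_ne_zero_iff]
    constructor
    · exact mul_ne_zero (by simpa using ha) (by simpa using hb)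
    · simp only [ne_eq, ← NNReal.coe_eq_zero]
      push_cast
      positivity
  simp_rw [pdf_factor ha hb z]
  rw [MeasureTheory.integral_const_mul, integral_gaussianPDFReal_eq_one _ hc, mul_one]

lemma integrable_pdf_conv {a b : ℝ≥0} (ha : a ≠ 0) (hb : b ≠ 0) (z : ℝ) :
    Integrable (fun x => gaussianPDFReal 0 a x * gaussianPDFReal 0 b (z - x)) := by
  simp_rw [pdf_factor ha hb z]
  exact (integrable_gaussianPDFReal _ _).const_mul _

lemma gaussian_conv (a b : ℝ≥0) :
    Measure.map (fun p : ℝ × ℝ => p.1 + p.2) ((gaussianReal 0 a).prod (gaussianReal 0 b))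
      = gaussianReal 0 (a + b) := by
  by_cases ha : a = 0
  · subst ha
    rw [gaussianReal_zero_var, Measure.dirac_prod,
      Measure.map_map measurable_add measurable_prodMk_left]
    simp [Function.comp_def, zero_add, Measure.map_id']
  by_cases hb : b = 0
  · subst hb
    rw [gaussianReal_zero_var, Measure.prod_dirac,
      Measure.map_map measurable_add (measurable_prodMk_right)]
    simp [Function.comp_def, add_zero, Measure.map_id']
  have hab : a + b ≠ 0 := fun h => ha (by simpa using (add_eq_zero.mp h).1)
  ext s hs
  rw [Measure.map_apply measurable_add hs,
    Measure.prod_apply (measurable_add hs)]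
  have inner_eq : ∀ x : ℝ, (gaussianReal 0 b) (Prod.mk x ⁻¹' ((fun p : ℝ × ℝ => p.1 + p.2) ⁻¹' s))
      = ∫⁻ z in s, gaussianPDF 0 b (z - x) := by
    intro x
    have hpre : (Prod.mk x ⁻¹' ((fun p : ℝ × ℝ => p.1 + p.2) ⁻¹' s)) = (fun y => x + y) ⁻¹' s := rfl
    rw [hpre, gaussianReal_apply 0 hb]
    calc ∫⁻ y in (fun y => x + y) ⁻¹' s, gaussianPDF 0 b y
        = ∫⁻ y in (fun y => x + y) ⁻¹' s, gaussianPDF 0 b ((x + y) - x) := by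
          simp
      _ = ∫⁻ z in s, gaussianPDF 0 b (z - x) ∂(Measure.map (fun y => x + y) volume) :=
          (setLIntegral_map hs (f := fun z => gaussianPDF 0 b (z - x))
            ((measurable_gaussianPDF 0 b).comp (measurable_id.sub_const x))
            (measurable_const_add x)).symm
      _ = ∫⁻ z in s, gaussianPDF 0 b (z - x) := by
          rw [map_add_left_eq_self volume x]
  simp_rw [inner_eq]
  have hmeas : Measurable fun x : ℝ => ∫⁻ z in s, gaussianPDF 0 b (z - x) :=
    Measurable.lintegral_prod_right (f := fun x z => gaussianPDF 0 b (z - x))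
      ((measurable_gaussianPDF 0 b).comp (measurable_snd.sub measurable_fst))
  rw [gaussianReal_of_var_ne_zero 0 ha,
    lintegral_withDensity_eq_lintegral_mul _ (measurable_gaussianPDF 0 a) hmeas]
  have swap : ∫⁻ x, gaussianPDF 0 a x * ∫⁻ z in s, gaussianPDF 0 b (z - x)
      = ∫⁻ z in s, ∫⁻ x, gaussianPDF 0 a x * gaussianPDF 0 b (z - x) := by
    have step : ∀ x : ℝ, gaussianPDF 0 a x * ∫⁻ z in s, gaussianPDF 0 b (z - x)
        = ∫⁻ z in s, gaussianPDF 0 a x * gaussianPDF 0 b (z - x) := fun x =>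
      (lintegral_const_mul _ ((measurable_gaussianPDF 0 b).comp (measurable_id.sub_const _))).symm
    simp_rw [step]
    exact lintegral_lintegral_swap (((measurable_gaussianPDF 0 a).comp measurable_fst).mul
      ((measurable_gaussianPDF 0 b).comp (measurable_snd.sub measurable_fst))).aemeasurable
  simp only [Pi.mul_apply]
  rw [swap, gaussianReal_apply 0 hab]
  refine setLIntegral_congr_fun_ae hs (ae_of_all _ fun z _ => ?_)
  have key := pdf_conv_integral ha hb z
  have : ∫⁻ x, gaussianPDF 0 a x * gaussianPDF 0 b (z - x)
      = ENNReal.ofReal (∫ x, gaussianPDFReal 0 a x * gaussianPDFReal 0 b (z - x)) := by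
    rw [ofReal_integral_eq_lintegral_ofReal (integrable_pdf_conv ha hb z)
      (ae_of_all _ fun x => mul_nonneg (gaussianPDFReal_nonneg _ _ _) (gaussianPDFReal_nonneg _ _ _))]
    refine lintegral_congr fun x => ?_
    rw [ENNReal.ofReal_mul (gaussianPDFReal_nonneg _ _ _)]
    rfl
  rw [this, key]
  rfl

lemma map_sum_gaussian (n : ℕ) (v : Fin n → ℝ) :
    Measure.map (fun ω : Fin n → ℝ => ∑ i, v i * ω i) (Measure.pi fun _ => gaussianReal 0 1)
      = gaussianReal 0 (∑ i, (NNReal.mk ((v i)^2) (sq_nonneg _) : ℝ≥0)) := by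
  induction n with
  | zero =>
      have h : (fun ω : Fin 0 → ℝ => ∑ i, v i * ω i) = fun _ => (0:ℝ) := by
        funext ω; simp
      rw [h, Measure.map_const]
      simp
  | succ n ih =>
      set e := MeasurableEquiv.piFinSuccAbove (fun _ : Fin (n+1) => ℝ) 0 with he
      have hmp := measurePreserving_piFinSuccAbove (fun _ : Fin (n+1) => gaussianReal 0 1) 0
      have hpi : (Measure.pi fun _ : Fin (n+1) => gaussianReal 0 1)
          = Measure.map e.symm ((gaussianReal 0 1).prod (Measure.pi fun _ : Fin n => gaussianReal 0 1)) :=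
        (hmp.symm e).map_eq.symm
      have hFm : Measurable (fun ω : Fin (n+1) → ℝ => ∑ i, v i * ω i) := by fun_prop
      rw [hpi, Measure.map_map hFm e.symm.measurable]
      have hcomp : ((fun ω : Fin (n+1) → ℝ => ∑ i, v i * ω i) ∘ e.symm)
          = (fun p : ℝ × ℝ => p.1 + p.2) ∘
            (Prod.map (fun x : ℝ => v 0 * x) (fun y : Fin n → ℝ => ∑ j, v j.succ * y j)) := by
        funext q
        simp [he, MeasurableEquiv.piFinSuccAbove, Fin.sum_univ_succ, Fin.insertNthEquiv,
          Fin.zero_succAbove]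
      rw [hcomp, ← Measure.map_map measurable_add (by fun_prop)]
      rw [← Measure.map_prod_map _ _ (by fun_prop) (by fun_prop)]
      rw [gaussianReal_map_const_mul, ih]
      simp only [mul_zero, mul_one]
      rw [gaussian_conv]
      congr 1
      rw [Fin.sum_univ_succ]


/-- The cumulative distribution function `Φ` of the standard Gaussian measure `N(0,1)` on `ℝ`. -/
noncomputable def Phi (x : ℝ) : ℝ := ((gaussianReal 0 1) (Set.Iic x)).toReal

/-- The inverse `Φ⁻¹` of the standard Gaussian CDF on `(0,1)`. -/
noncomputable def PhiInv (p : ℝ) : ℝ := Function.invFun Phi p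


lemma Phi_eq_integral (x : ℝ) : Phi x = ∫ t in Set.Iic x, gaussianPDFReal 0 1 t := by
  rw [Phi, gaussianReal_apply_eq_integral 0 one_ne_zero,
    ENNReal.toReal_ofReal (setIntegral_nonneg measurableSet_Iic
      (fun t _ => gaussianPDFReal_nonneg 0 1 t))]

lemma Phi_add (hxy : x ≤ y) : Phi y = Phi x + ∫ t in Set.Ioc x y, gaussianPDFReal 0 1 t := by
  rw [Phi_eq_integral, Phi_eq_integral, ← Set.Iic_union_Ioc_eq_Iic hxy,
    setIntegral_union (Set.Iic_disjoint_Ioc le_rfl) measurableSet_Ioc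
      (integrable_gaussianPDFReal 0 1).integrableOn (integrable_gaussianPDFReal 0 1).integrableOn]

lemma Phi_strictMono : StrictMono Phi := by
  intro x y hxy
  rw [Phi_add hxy.le]
  have hpos : 0 < ∫ t in Set.Ioc x y, gaussianPDFReal 0 1 t := by
    rw [setIntegral_pos_iff_support_of_nonneg_ae
      (ae_of_all _ (gaussianPDFReal_nonneg 0 1)) (integrable_gaussianPDFReal 0 1).integrableOn]
    have hsupp : Function.support (gaussianPDFReal 0 1) = Set.univ :=
      Set.eq_univ_of_forall fun t => (gaussianPDFReal_pos 0 1 t one_ne_zero).ne'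
    rw [hsupp, Set.univ_inter, Real.volume_Ioc]
    simp [hxy]
  linarith

lemma Phi_continuous : Continuous Phi := by
  have key : ∀ y : ℝ, Phi y = Phi 0 + ∫ t in (0:ℝ)..y, gaussianPDFReal 0 1 t := by
    intro y
    rcases le_or_gt 0 y with h | h
    · rw [intervalIntegral.integral_of_le h, ← Phi_add h]
    · rw [intervalIntegral.integral_symm, intervalIntegral.integral_of_le h.le]
      have := Phi_add h.le (x := y) (y := 0)
      rw [MeasureTheory.integral_Ioc_eq_integral_Ioo] at this ⊢
      linarith
  have : Phi = fun y => Phi 0 + ∫ t in (0:ℝ)..y, gaussianPDFReal 0 1 t := funext key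
  rw [this]
  exact continuous_const.add ((integrable_gaussianPDFReal 0 1).continuous_primitive 0)

lemma tendsto_Phi_atTop : Filter.Tendsto Phi Filter.atTop (nhds 1) := by
  have h := tendsto_measure_Iic_atTop (gaussianReal 0 1)
  rw [measure_univ] at h
  have := (ENNReal.tendsto_toReal ENNReal.one_ne_top).comp h
  unfold Phi
  simpa [Phi, Function.comp_def] using this

lemma tendsto_Phi_atBot : Filter.Tendsto Phi Filter.atBot (nhds 0) := by
  have hempty : ⋂ x : ℝ, Set.Iic x = ∅ := by
    ext y
    simp only [Set.mem_iInter, Set.mem_Iic, Set.mem_empty_iff_false, iff_false, not_forall]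
    exact ⟨y - 1, by linarith⟩
  have h := tendsto_measure_iInter_atBot (μ := gaussianReal 0 1) (s := fun x : ℝ => Set.Iic x)
    (fun x => measurableSet_Iic.nullMeasurableSet)
    (fun a b hab => Set.Iic_subset_Iic.mpr hab) ⟨0, by finiteness⟩
  rw [hempty, measure_empty] at h
  have := (ENNReal.tendsto_toReal ENNReal.zero_ne_top).comp h
  unfold Phi
  simpa [Phi, Function.comp_def] using this

lemma Phi_invFun_eq {p : ℝ} (hp : p ∈ Set.Ioo (0:ℝ) 1) : Phi (PhiInv p) = p := by
  have hb : ∃ b, p < Phi b :=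
    (tendsto_Phi_atTop.eventually (eventually_gt_nhds hp.2)).exists
  have ha : ∃ a, Phi a < p :=
    (tendsto_Phi_atBot.eventually (eventually_lt_nhds hp.1)).exists
  obtain ⟨b, hb⟩ := hb
  obtain ⟨a, ha⟩ := ha
  have hab : a ≤ b := by
    by_contra hcon
    exact absurd ((Phi_strictMono.le_iff_le).mpr (le_of_not_ge hcon)) (by linarith [ha, hb] : ¬ Phi b ≤ Phi a)
  obtain ⟨x, _, hx⟩ := intermediate_value_Icc hab Phi_continuous.continuousOn
    (Set.mem_Icc.mpr ⟨ha.le, hb.le⟩)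
  exact Function.invFun_eq ⟨x, hx⟩

lemma gaussian_Ici_neg (x : ℝ) :
    (gaussianReal 0 1) (Set.Ici (-x)) = (gaussianReal 0 1) (Set.Iic x) := by
  have hmap : Measure.map (fun y : ℝ => -y) (gaussianReal 0 1) = gaussianReal 0 1 := by
    have := gaussianReal_map_const_mul (μ := 0) (v := 1) (-1)
    simp only [neg_one_mul, mul_zero, neg_zero] at this
    rw [this]
    congr 1
    ext
    push_cast
    norm_num
  conv_lhs => rw [← hmap]
  rw [Measure.map_apply measurable_neg measurableSet_Ici]
  congr 1
  ext y
  simp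

lemma integral_exp_tail (a : ℝ) :
    ∫ x in Set.Ioi a, x * Real.exp (-x^2/2) = Real.exp (-a^2/2) := by
  have hderiv : ∀ x ∈ Set.Ioi a, HasDerivAt (fun y => -Real.exp (-y^2/2))
      (x * Real.exp (-x^2/2)) x := by
    intro x _
    have h1 : HasDerivAt (fun y : ℝ => -y^2/2) (-x) x := by
      have := ((hasDerivAt_pow 2 x).neg).div_const 2
      refine this.congr_deriv ?_
      push_cast
      ring
    have h2 := (Real.hasDerivAt_exp (-x^2/2)).comp x h1
    have h3 := h2.neg
    refine h3.congr_deriv ?_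
    simp [Function.comp_def]
    ring
  have hint : MeasureTheory.IntegrableOn (fun x => x * Real.exp (-x^2/2)) (Set.Ioi a) := by
    have : (fun x : ℝ => x * Real.exp (-x^2/2)) = fun x => x * Real.exp (-(1/2) * x^2) := by
      funext x; ring_nf
    rw [this]
    exact (integrable_mul_exp_neg_mul_sq (by norm_num)).integrableOn
  have htend : Filter.Tendsto (fun y => -Real.exp (-y^2/2)) Filter.atTop (nhds 0) := by
    rw [show (0:ℝ) = -0 by ring]
    refine Filter.Tendsto.neg ?_
    refine Real.tendsto_exp_atBot.comp ?_
    have h1 : Filter.Tendsto (fun y : ℝ => y^2/2) Filter.atTop Filter.atTop :=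
      (Filter.tendsto_pow_atTop two_ne_zero).atTop_div_const (by norm_num)
    simp only [neg_div]
    exact Filter.tendsto_neg_atTop_atBot.comp h1
  have := MeasureTheory.integral_Ioi_of_hasDerivAt_of_tendsto
    (Continuous.continuousWithinAt (by continuity)) hderiv hint htend
  rw [this]
  ring

lemma integral_id_gaussian_Ici (a : ℝ) :
    ∫ x in Set.Ici a, x ∂(gaussianReal 0 1) = (Real.sqrt (2*Real.pi))⁻¹ * Real.exp (-a^2/2) := by
  rw [gaussianReal_of_var_ne_zero 0 one_ne_zero]
  have hpdf : (gaussianPDF 0 1) = fun x => ((Real.toNNReal (gaussianPDFReal 0 1 x) : ℝ≥0) : ℝ≥0∞) :=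
    rfl
  rw [hpdf, setIntegral_withDensity_eq_setIntegral_smul
    (measurable_gaussianPDFReal 0 1).real_toNNReal _ measurableSet_Ici]
  have hcongr : ∀ x : ℝ, (Real.toNNReal (gaussianPDFReal 0 1 x)) • x
      = (Real.sqrt (2*Real.pi))⁻¹ * (x * Real.exp (-x^2/2)) := by
    intro x
    rw [NNReal.smul_def, Real.coe_toNNReal _ (gaussianPDFReal_nonneg 0 1 x)]
    simp only [gaussianPDFReal, NNReal.coe_one, mul_one, sub_zero, smul_eq_mul]
    ring
  simp_rw [hcongr]
  rw [MeasureTheory.integral_const_mul, MeasureTheory.integral_Ici_eq_integral_Ioi,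
    integral_exp_tail]


/-- **Lemma A.3 (attainment)**: the half-space indicator
`w*(ω) = 1_{⟨v,ω⟩ ≥ −‖v‖·Φ⁻¹(p)}` has Gaussian mean `p` and achieves correlation
`(‖v‖₂/√(2π)) · exp(−Φ⁻¹(p)²/2)` with the linear functional `ω ↦ ⟨v, ω⟩`. -/
theorem stmt_5
    (n : ℕ) (hn : 1 ≤ n)
    (μ : Measure (EuclideanSpace ℝ (Fin n)))
    (hμ : μ = Measure.map (WithLp.toLp 2) (Measure.pi (fun _ => gaussianReal 0 1)))
    (v : EuclideanSpace ℝ (Fin n)) (hv : v ≠ 0)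
    (p : ℝ) (hp : p ∈ Set.Ioo (0 : ℝ) 1)
    (wStar : EuclideanSpace ℝ (Fin n) → ℝ)
    (hwStar : ∀ ω, wStar ω = if -‖v‖ * PhiInv p ≤ ⟪v, ω⟫ then (1 : ℝ) else 0) :
    ∫ ω, wStar ω ∂μ = p ∧
      ∫ ω, ⟪v, ω⟫ * wStar ω ∂μ =
        ‖v‖ / Real.sqrt (2 * Real.pi) * Real.exp (-(PhiInv p) ^ 2 / 2) := by
  obtain ⟨hp0, hp1⟩ := hp
  set q : ℝ := PhiInv p with hq
  have hs : (0:ℝ) < ‖v‖ := norm_pos_iff.mpr hv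
  set c : ℝ := -‖v‖ * q with hc
  have hinner : ∀ ω : EuclideanSpace ℝ (Fin n), ⟪v, ω⟫ = ∑ i, v i * ω i := by
    intro ω
    rw [PiLp.inner_apply]
    simp [mul_comm]
  have hL : Measurable fun ω : EuclideanSpace ℝ (Fin n) => ⟪v, ω⟫ := by
    have : (fun ω : EuclideanSpace ℝ (Fin n) => ⟪v, ω⟫)
        = fun ω : EuclideanSpace ℝ (Fin n) => ∑ i, v i * ω i := funext hinner
    rw [this]
    exact Finset.measurable_sum _ fun i _ => ((measurable_pi_apply i).comp (WithLp.measurable_ofLp 2 _)).const_mul _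
  have hmap1 : Measure.map (fun ω : EuclideanSpace ℝ (Fin n) => ⟪v, ω⟫) μ
      = gaussianReal 0 (∑ i, (NNReal.mk ((v i)^2) (sq_nonneg _) : NNReal)) := by
    rw [hμ, funext hinner]
    rw [Measure.map_map (by fun_prop) (WithLp.measurable_toLp 2 _)]
    exact map_sum_gaussian n (fun i => v i)
  have hnormsq : ‖v‖^2 = ∑ i, (v i)^2 := by
    rw [EuclideanSpace.norm_eq, Real.sq_sqrt (Finset.sum_nonneg fun i _ => sq_nonneg _)]
    refine Finset.sum_congr rfl fun i _ => ?_
    rw [Real.norm_eq_abs, sq_abs]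
  have hvar : gaussianReal 0 (∑ i, (NNReal.mk ((v i)^2) (sq_nonneg _) : NNReal))
      = Measure.map (fun t : ℝ => ‖v‖ * t) (gaussianReal 0 1) := by
    rw [gaussianReal_map_const_mul, mul_zero]
    congr 1
    ext
    push_cast
    rw [mul_one, ← hnormsq]
  have hmapfull : Measure.map (fun ω : EuclideanSpace ℝ (Fin n) => ⟪v, ω⟫) μ
      = Measure.map (fun t : ℝ => ‖v‖ * t) (gaussianReal 0 1) := hmap1.trans hvar
  have hcond : ∀ t : ℝ, (c ≤ ‖v‖ * t) ↔ (-q ≤ t) := by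
    intro t
    rw [hc, show -‖v‖ * q = ‖v‖ * (-q) by ring]
    exact mul_le_mul_iff_right₀ hs
  have hset : MeasurableSet {ω : EuclideanSpace ℝ (Fin n) | c ≤ ⟪v, ω⟫} :=
    hL measurableSet_Ici
  have hPhi : ((gaussianReal 0 1) (Set.Iic q)).toReal = p := Phi_invFun_eq ⟨hp0, hp1⟩
  have hmeasS : μ {ω : EuclideanSpace ℝ (Fin n) | c ≤ ⟪v, ω⟫} = (gaussianReal 0 1) (Set.Iic q) := by
    have hpre : {ω : EuclideanSpace ℝ (Fin n) | c ≤ ⟪v, ω⟫}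
        = (fun ω : EuclideanSpace ℝ (Fin n) => ⟪v, ω⟫) ⁻¹' (Set.Ici c) := rfl
    rw [hpre, ← Measure.map_apply hL measurableSet_Ici, hmapfull,
      Measure.map_apply (measurable_const_mul _) measurableSet_Ici]
    have : (fun t : ℝ => ‖v‖ * t) ⁻¹' (Set.Ici c) = Set.Ici (-q) := by
      ext t
      simp only [Set.mem_preimage, Set.mem_Ici]
      exact hcond t
    rw [this, gaussian_Ici_neg]
  constructor
  · have hind : wStar = Set.indicator {ω : EuclideanSpace ℝ (Fin n) | c ≤ ⟪v, ω⟫}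
        (fun _ => (1:ℝ)) := by
      funext ω
      by_cases h : c ≤ ⟪v, ω⟫ <;> simp [hwStar ω, Set.indicator_apply, h, ← hc, ← hq]
    rw [hind]
    erw [MeasureTheory.integral_indicator_one hset]
    rw [measureReal_def, hmeasS, hPhi]
  · have hFm : Measurable (fun t : ℝ => t * if c ≤ t then (1:ℝ) else 0) :=
      measurable_id.mul (Measurable.ite measurableSet_Ici measurable_const measurable_const)
    calc ∫ ω, ⟪v, ω⟫ * wStar ω ∂μ
        = ∫ t, t * (if c ≤ t then (1:ℝ) else 0)
            ∂(Measure.map (fun ω : EuclideanSpace ℝ (Fin n) => ⟪v, ω⟫) μ) := by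
          rw [integral_map hL.aemeasurable hFm.aestronglyMeasurable]
          exact integral_congr_ae (ae_of_all _ fun ω => by simp only [hwStar])
      _ = ∫ x, (‖v‖ * x) * (if c ≤ ‖v‖ * x then (1:ℝ) else 0) ∂(gaussianReal 0 1) := by
          rw [hmapfull, integral_map (measurable_const_mul _).aemeasurable
            hFm.aestronglyMeasurable]
      _ = ∫ x, ‖v‖ * ((Set.Ici (-q)).indicator (fun t => t) x) ∂(gaussianReal 0 1) := by
          refine integral_congr_ae (ae_of_all _ fun x => ?_)
          show ‖v‖ * x * (if c ≤ ‖v‖ * x then (1:ℝ) else 0)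
              = ‖v‖ * (Set.Ici (-q)).indicator (fun t => t) x
          by_cases hx : -q ≤ x
          · rw [if_pos ((hcond x).mpr hx), Set.indicator_of_mem (Set.mem_Ici.mpr hx)]
            ring
          · rw [if_neg (fun h => hx ((hcond x).mp h)),
              Set.indicator_of_notMem (fun h => hx (Set.mem_Ici.mp h))]
            ring
      _ = ‖v‖ * ∫ x in Set.Ici (-q), x ∂(gaussianReal 0 1) := by
          rw [MeasureTheory.integral_const_mul, integral_indicator measurableSet_Ici]
      _ = ‖v‖ / Real.sqrt (2 * Real.pi) * Real.exp (-q ^ 2 / 2) := by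
          rw [integral_id_gaussian_Ici, neg_sq]
          ring
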